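/- Let f(x) = (1/η)·ln(Σ_{i=1}^m exp(−η(⟨α_i, x⟩ + b_i))) where each α_i ∈ [−U,U]^d. Then for all x, y ∈ ℝ^d, f(y) ≤ f(x) + ⟨∇f(x), y − x⟩ + U²η·‖y − x‖₁². (That is, f is 2U²η-smooth with respect to the ℓ₁-norm.) -/

import Mathlib

open Real Finset

lemma exp_quad {z : ℝ} (hz : |z| ≤ 1) : Real.exp z ≤ 1 + z + z ^ 2 := by
  have h := Real.exp_bound hz (n := 2) (by norm_num)
  have h2 : ∑ m ∈ range 2, z ^ m / m.factorial = 1 + z := by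
    simp [Finset.sum_range_succ]
  rw [h2] at h
  norm_num [Nat.factorial] at h
  have h3 := (abs_le.1 h).2
  have hz2 : |z| ^ 2 = z ^ 2 := sq_abs z
  nlinarith [h3]

lemma numeric_aux : Real.log ((1 + Real.exp (-2))/2) ≤ Real.sinh 1 / Real.cosh 1 - 1 := by
  have he : (2.7182818283 : ℝ) < Real.exp 1 := Real.exp_one_gt_d9
  have he2 : (7.389 : ℝ) < Real.exp 1 * Real.exp 1 := by nlinarith
  have hlog2 : (0.6931471803 : ℝ) < Real.log 2 := Real.log_two_gt_d9
  have h1 : Real.log ((1 + Real.exp (-2))/2) ≤ Real.exp (-2) - Real.log 2 := by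
    rw [Real.log_div (by positivity) (by norm_num)]
    have : Real.log (1 + Real.exp (-2)) ≤ Real.exp (-2) := by
      have := Real.log_le_sub_one_of_pos (show (0:ℝ) < 1 + Real.exp (-2) by positivity)
      linarith
    linarith
  have hmul : Real.exp (-2) * (Real.exp 1 * Real.exp 1) = 1 := by
    rw [← Real.exp_add 1 1, ← Real.exp_add]; norm_num
  have htanh1 : (0.76 : ℝ) ≤ Real.sinh 1 / Real.cosh 1 := by
    rw [le_div_iff₀ (Real.cosh_pos 1), Real.sinh_eq, Real.cosh_eq, Real.exp_neg]
    have hepos : (0:ℝ) < Real.exp 1 := Real.exp_pos 1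
    have hinv : Real.exp 1 * (Real.exp 1)⁻¹ = 1 := mul_inv_cancel₀ hepos.ne'
    have hinvpos : (0:ℝ) < (Real.exp 1)⁻¹ := by positivity
    have key : (1.76:ℝ) ≤ 0.24 * (Real.exp 1 * Real.exp 1) := by linarith [he2]
    have key2 : (1.76:ℝ) * (Real.exp 1)⁻¹ ≤ 0.24 * Real.exp 1 := by
      have h3 := mul_le_mul_of_nonneg_right key hinvpos.le
      have h4 : 0.24 * (Real.exp 1 * Real.exp 1) * (Real.exp 1)⁻¹ = 0.24 * Real.exp 1 := by
        rw [mul_assoc, mul_assoc, hinv, mul_one]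
      linarith
    linarith
  have hexp2small : Real.exp (-2) ≤ 0.136 := by
    nlinarith [hmul, he2, Real.exp_pos (-2)]
  linarith

lemma lse_gap {m : ℕ} (p Z : Fin m → ℝ) (M : ℝ) (hM : 0 ≤ M)
    (hp : ∀ i, 0 < p i) (hps : ∑ i, p i = 1) (hZ : ∀ i, |Z i| ≤ M) :
    Real.log (∑ i, p i * Real.exp (Z i)) ≤ (∑ i, p i * Z i) + M ^ 2 := by
  have hm : 0 < m := by
    rcases Nat.eq_zero_or_pos m with h | h
    · subst h; simp at hps
    · exact h
  have hne : (Finset.univ : Finset (Fin m)).Nonempty := by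
    simpa [Finset.univ_nonempty_iff] using Fin.pos_iff_nonempty.mp hm
  have hApos : 0 < ∑ i, p i * Real.exp (Z i) :=
    Finset.sum_pos (fun i _ => mul_pos (hp i) (Real.exp_pos _)) hne
  set A := ∑ i, p i * Real.exp (Z i) with hA
  set μ := ∑ i, p i * Z i with hμdef
  have hμ : |μ| ≤ M := by
    calc |μ| ≤ ∑ i, |p i * Z i| := Finset.abs_sum_le_sum_abs _ _
    _ ≤ ∑ i, p i * M := by
        apply Finset.sum_le_sum
        intro i _
        rw [abs_mul, abs_of_pos (hp i)]
        exact mul_le_mul_of_nonneg_left (hZ i) (hp i).le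
    _ = M := by rw [← Finset.sum_mul, hps, one_mul]
  rcases le_or_gt M 1 with hM1 | hM1
  · -- small case
    have hAle : A ≤ 1 + μ + M ^ 2 := by
      have : A ≤ ∑ i, p i * (1 + Z i + M ^ 2) := by
        apply Finset.sum_le_sum
        intro i _
        apply mul_le_mul_of_nonneg_left _ (hp i).le
        have h1 : |Z i| ≤ 1 := (hZ i).trans hM1
        have := exp_quad h1
        nlinarith [sq_abs (Z i), abs_nonneg (Z i), hZ i, abs_le.1 (hZ i)]
      calc A ≤ ∑ i, p i * (1 + Z i + M ^ 2) := this
      _ = 1 + μ + M ^ 2 := by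
          simp only [mul_add, Finset.sum_add_distrib, ← Finset.sum_mul, hps]
          ring
    calc Real.log A ≤ A - 1 := Real.log_le_sub_one_of_pos hApos
    _ ≤ μ + M ^ 2 := by linarith
  · -- large case, M > 1
    have hMpos : (0:ℝ) < M := by linarith
    set c := Real.cosh M with hc
    set s := Real.sinh M with hs
    have hcpos : 0 < c := Real.cosh_pos M
    have hchord : A ≤ c + (μ / M) * s := by
      have : A ≤ ∑ i, p i * (c + (Z i / M) * s) := by
        apply Finset.sum_le_sum
        intro i _
        apply mul_le_mul_of_nonneg_left _ (hp i).le
        have ht : |Z i / M| ≤ 1 := by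
          rw [abs_div, abs_of_pos hMpos, div_le_one hMpos]; exact hZ i
        have := Real.exp_mul_le_cosh_add_mul_sinh ht M
        rwa [div_mul_cancel₀ _ hMpos.ne'] at this
      have heq : ∑ i, p i * (c + (Z i / M) * s) = c + (μ / M) * s := by
        have hterm : ∀ i ∈ Finset.univ, p i * (c + (Z i / M) * s)
            = p i * c + (p i * Z i) * (s / M) := fun i _ => by ring
        rw [Finset.sum_congr rfl hterm, Finset.sum_add_distrib, ← Finset.sum_mul,
          ← Finset.sum_mul, hps, ← hμdef]
        ring
      calc A ≤ _ := this
      _ = c + (μ / M) * s := heq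
    -- log A ≤ log c + μ*s/(M*c)
    have hstep : Real.log A ≤ Real.log c + μ * s / (M * c) := by
      have hAc : 0 < A / c := div_pos hApos hcpos
      have h1 : Real.log A = Real.log c + Real.log (A / c) := by
        rw [Real.log_div hApos.ne' hcpos.ne']; ring
      have h2 : Real.log (A / c) ≤ A / c - 1 := Real.log_le_sub_one_of_pos hAc
      have h3 : A / c - 1 ≤ μ * s / (M * c) := by
        rw [div_sub_one hcpos.ne', div_le_div_iff₀ hcpos (by positivity)]
        have : (A - c) * M ≤ (μ / M * s) * M := by
          nlinarith [hchord]
        calc (A - c) * (M * c) = ((A - c) * M) * c := by ring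
        _ ≤ ((μ / M * s) * M) * c := by nlinarith [this, hcpos]
        _ = μ * s * c := by field_simp
      linarith
    -- s ≤ M * c  (since s ≤ c ≤ M*c when M ≥ 1)
    have hsc : s ≤ c := by
      have : c - s = Real.exp (-M) := by
        rw [hc, hs, Real.cosh_eq, Real.sinh_eq]; ring
      nlinarith [Real.exp_pos (-M)]
    have hsMc : s ≤ M * c := by nlinarith
    -- μ*(s - M*c) ≤ M*(M*c - s)
    have hμbound : μ * s / (M * c) - μ ≤ M - s / c := by
      have hMc : 0 < M * c := by positivity
      rw [div_sub' hMc.ne', div_le_iff₀ hMc] at *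
      have key : μ * s - μ * (M * c) ≤ (M - s / c) * (M * c) := by
        have h1 : μ * (s - M * c) ≤ (-M) * (s - M * c) := by
          apply mul_le_mul_of_nonpos_right _ (by linarith)
          linarith [abs_le.1 hμ]
        have h2 : (M - s / c) * (M * c) = M * (M * c) - s * M := by
          field_simp
        nlinarith [h1]
      linarith [key]
    -- log c ≤ M + log ((1 + exp (-2))/2)
    have hlogc : Real.log c ≤ M + Real.log ((1 + Real.exp (-2))/2) := by
      have hcb : c ≤ Real.exp M * ((1 + Real.exp (-2))/2) := by
        rw [hc, Real.cosh_eq]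
        have : Real.exp (-M) ≤ Real.exp M * Real.exp (-2) := by
          rw [← Real.exp_add]
          apply Real.exp_le_exp.2
          linarith
        nlinarith [Real.exp_pos M]
      calc Real.log c ≤ Real.log (Real.exp M * ((1 + Real.exp (-2))/2)) :=
        Real.log_le_log hcpos hcb
      _ = M + Real.log ((1 + Real.exp (-2))/2) := by
          rw [Real.log_mul (Real.exp_pos M).ne' (by positivity), Real.log_exp]
    -- s/c ≥ tanh 1
    have htanh : Real.sinh 1 / Real.cosh 1 ≤ s / c := by
      rw [div_le_div_iff₀ (Real.cosh_pos 1) hcpos]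
      have : (0:ℝ) ≤ Real.sinh (M - 1) := Real.sinh_nonneg_iff.2 (by linarith)
      rw [Real.sinh_sub] at this
      linarith
    -- numeric: log((1+exp(-2))/2) ≤ sinh 1/cosh 1 - 1
    have hnum : Real.log ((1 + Real.exp (-2))/2) ≤ Real.sinh 1 / Real.cosh 1 - 1 :=
      numeric_aux
    have hsq : 2 * M - 1 ≤ M ^ 2 := by nlinarith [sq_nonneg (M - 1)]
    calc Real.log A ≤ Real.log c + μ * s / (M * c) := hstep
    _ = μ + (Real.log c + (μ * s / (M * c) - μ)) := by ring
    _ ≤ μ + (M + Real.log ((1 + Real.exp (-2))/2) + (M - s/c)) := by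
        have := hμbound; have := hlogc; linarith
    _ ≤ μ + (2 * M - 1) := by
        have := hnum; have := htanh; linarith
    _ ≤ μ + M ^ 2 := by linarith


theorem stmt_2 (η U : ℝ) (hη : 0 < η) (hU : 0 < U) (m d : ℕ) (hm : 0 < m)
    (α : Fin m → EuclideanSpace ℝ (Fin d)) (b : Fin m → ℝ)
    (hα : ∀ i j, |α i j| ≤ U)
    (f : EuclideanSpace ℝ (Fin d) → ℝ)
    (hf : f = fun x => (1 / η) *
      Real.log (∑ i : Fin m, Real.exp (-η * ((inner ℝ (α i) x : ℝ) + b i))))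
    (x y : EuclideanSpace ℝ (Fin d)) :
    f y ≤ f x + (inner ℝ (gradient f x) (y - x) : ℝ) +
      U ^ 2 * η * (∑ j, |y j - x j|) ^ 2 := by
  subst hf
  set e : Fin m → ℝ := fun i => Real.exp (-η * ((inner ℝ (α i) x : ℝ) + b i)) with he
  set Sx : ℝ := ∑ i, e i with hSxdef
  have hne : (Finset.univ : Finset (Fin m)).Nonempty := by
    simpa [Finset.univ_nonempty_iff] using Fin.pos_iff_nonempty.mp hm
  have hSx : 0 < Sx := Finset.sum_pos (fun i _ => Real.exp_pos _) hne
  set L : EuclideanSpace ℝ (Fin d) →L[ℝ] ℝ := ∑ i, e i • ((-η) • innerSL ℝ (α i)) with hL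
  -- derivative of S
  have hS : HasFDerivAt (fun z : EuclideanSpace ℝ (Fin d) => ∑ i, Real.exp (-η * ((inner ℝ (α i) z : ℝ) + b i))) L x := by
    apply HasFDerivAt.fun_sum
    intro i _
    have h1 : HasFDerivAt (fun z : EuclideanSpace ℝ (Fin d) => (inner ℝ (α i) z : ℝ)) (innerSL ℝ (α i)) x :=
      (innerSL ℝ (α i)).hasFDerivAt
    exact ((h1.add_const (b i)).const_mul (-η)).exp
  have hf' : HasFDerivAt (fun z : EuclideanSpace ℝ (Fin d) => (1/η) * Real.log
      (∑ i, Real.exp (-η * ((inner ℝ (α i) z : ℝ) + b i))))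
      ((1/η) • Sx⁻¹ • L) x := (hS.log hSx.ne').const_mul (1/η)
  have hgrad : (inner ℝ (gradient (fun z : EuclideanSpace ℝ (Fin d) => (1/η) * Real.log
      (∑ i, Real.exp (-η * ((inner ℝ (α i) z : ℝ) + b i)))) x) (y - x) : ℝ)
      = ((1/η) • Sx⁻¹ • L) (y - x) := by
    rw [gradient, hf'.fderiv, InnerProductSpace.toDual_symm_apply]
  set Z : Fin m → ℝ := fun i => -η * (inner ℝ (α i) (y - x) : ℝ) with hZdef
  have hLapp : ((1/η) • Sx⁻¹ • L) (y - x) = (1/η) * (Sx⁻¹ * ∑ i, e i * Z i) := by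
    simp only [ContinuousLinearMap.coe_smul', Pi.smul_apply, smul_eq_mul, hL,
      ContinuousLinearMap.sum_apply, ContinuousLinearMap.smul_apply, innerSL_apply_apply, hZdef]
  -- f y in terms of Z
  set T : ℝ := ∑ i, e i * Real.exp (Z i) with hT
  have hTpos : 0 < T :=
    Finset.sum_pos (fun i _ => mul_pos (Real.exp_pos _) (Real.exp_pos _)) hne
  have hfy : (∑ i, Real.exp (-η * ((inner ℝ (α i) y : ℝ) + b i))) = T := by
    apply Finset.sum_congr rfl
    intro i _
    rw [he]
    rw [← Real.exp_add]
    congr 1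
    have : (inner ℝ (α i) (y - x) : ℝ) = (inner ℝ (α i) y : ℝ) - (inner ℝ (α i) x : ℝ) :=
      inner_sub_right _ _ _
    rw [hZdef]
    simp only []
    rw [this]
    ring
  set σ : ℝ := ∑ j, |y j - x j| with hσ
  have hσ0 : 0 ≤ σ := Finset.sum_nonneg fun j _ => abs_nonneg _
  set M : ℝ := η * (U * σ) with hM
  have hM0 : 0 ≤ M := by positivity
  have hZb : ∀ i, |Z i| ≤ M := by
    intro i
    rw [hZdef]
    simp only []
    rw [abs_mul, abs_neg, abs_of_pos hη]
    apply mul_le_mul_of_nonneg_left _ hη.le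
    have hinner : (inner ℝ (α i) (y - x) : ℝ) = ∑ j, α i j * (y j - x j) := by
      rw [PiLp.inner_apply]
      apply Finset.sum_congr rfl
      intro j _
      simp [RCLike.inner_apply, PiLp.sub_apply, mul_comm]
    rw [hinner]
    calc |∑ j, α i j * (y j - x j)| ≤ ∑ j, |α i j * (y j - x j)| :=
      Finset.abs_sum_le_sum_abs _ _
    _ ≤ ∑ j, U * |y j - x j| := by
        apply Finset.sum_le_sum
        intro j _
        rw [abs_mul]
        exact mul_le_mul_of_nonneg_right (hα i j) (abs_nonneg _)
    _ = U * σ := by rw [hσ, Finset.mul_sum]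
  -- apply lse_gap
  have hps : ∑ i, e i / Sx = 1 := by
    rw [← Finset.sum_div, ← hSxdef, div_self hSx.ne']
  have hgap := lse_gap (fun i => e i / Sx) Z M hM0
    (fun i => div_pos (Real.exp_pos _) hSx) hps hZb
  have hTS : ∑ i, (e i / Sx) * Real.exp (Z i) = T / Sx := by
    rw [hT, Finset.sum_div]
    apply Finset.sum_congr rfl
    intro i _
    ring
  rw [hTS] at hgap
  have hlogT : Real.log (T / Sx) = Real.log T - Real.log Sx :=
    Real.log_div hTpos.ne' hSx.ne'
  have hμeq : ∑ i, (e i / Sx) * Z i = Sx⁻¹ * ∑ i, e i * Z i := by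
    rw [Finset.mul_sum]
    apply Finset.sum_congr rfl
    intro i _
    ring
  rw [hlogT, hμeq] at hgap
  -- final assembly
  beta_reduce
  have hSxg : (∑ i, Real.exp (-η * ((inner ℝ (α i) x : ℝ) + b i))) = Sx := rfl
  rw [hgrad, hLapp, hfy, hSxg]
  have hMsq : (1/η) * M ^ 2 = U ^ 2 * η * σ ^ 2 := by
    rw [hM]
    field_simp
  have h1η : 0 ≤ 1/η := by positivity
  have := mul_le_mul_of_nonneg_left hgap h1η
  calc (1/η) * Real.log T
      = (1/η) * Real.log Sx + (1/η) * (Real.log T - Real.log Sx) := by ring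
  _ ≤ (1/η) * Real.log Sx + (1/η) * (Sx⁻¹ * ∑ i, e i * Z i + M ^ 2) := by
      linarith
  _ = (1/η) * Real.log Sx + (1/η) * (Sx⁻¹ * ∑ i, e i * Z i) + (1/η) * M ^ 2 := by ring
  _ = (1/η) * Real.log Sx + (1/η) * (Sx⁻¹ * ∑ i, e i * Z i) + U ^ 2 * η * σ ^ 2 := by
      rw [hMsq]
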